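/- Let f be a measurable regressor with E[(f(X)−Y)²] < ∞ and suppose R(f,X) ≤ B almost surely for some constant B ≥ c. Then for every measurable rejector r : 𝒳 → {0,1}, 0 ≤ L_RwR(f, r) − L_RwR(f, r_f) ≤ E[ (R(f,X) + c) · 1{r(X) ≠ r_f(X)} ] ≤ (B + c) · P(r(X) ≠ r_f(X)), where r_f is the rejector induced by f. -/

import Mathlib

open MeasureTheory Filter

noncomputable section

/-- The regression-with-rejection (RwR) loss
`L_RwR(f,r) = E[ r(X)·(f(X)−Y)² + (1−r(X))·c ]`. -/
def LRwR {Ω : Type*} [MeasurableSpace Ω] {d : ℕ} (μ : Measure Ω)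
    (X : Ω → EuclideanSpace ℝ (Fin d)) (Y : Ω → ℝ) (c : ℝ)
    (f r : EuclideanSpace ℝ (Fin d) → ℝ) : ℝ :=
  ∫ ω, r (X ω) * (f (X ω) - Y ω) ^ 2 + (1 - r (X ω)) * c ∂μ

/-- `g : 𝒳 → ℝ` is a measurable version of the conditional expectation
`E[Z | X]`, i.e. `g(X) = E[Z | σ(X)]` a.s. -/
def IsCondMean {Ω : Type*} [MeasurableSpace Ω] {d : ℕ} (μ : Measure Ω)
    (X : Ω → EuclideanSpace ℝ (Fin d)) (Z : Ω → ℝ)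
    (g : EuclideanSpace ℝ (Fin d) → ℝ) : Prop :=
  (fun ω => g (X ω)) =ᵐ[μ] μ[Z | MeasurableSpace.comap X inferInstance]

/-- the suboptimality of any rejector `r` relative to the induced
rejector `r_f` is controlled by the disagreement event:
`0 ≤ L_RwR(f,r) − L_RwR(f,r_f) ≤ E[(R(f,X)+c)·1{r(X) ≠ r_f(X)}]
   ≤ (B+c)·P(r(X) ≠ r_f(X))`. -/
theorem stmt18 {Ω : Type*} [MeasurableSpace Ω] {d : ℕ}
    (μ : Measure Ω) [IsProbabilityMeasure μ]
    (X : Ω → EuclideanSpace ℝ (Fin d)) (Y : Ω → ℝ)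
    (hX : Measurable X) (hY : Measurable Y)
    (hY2 : Integrable (fun ω => (Y ω) ^ 2) μ)
    (c : ℝ) (hc : 0 < c)
    (f : EuclideanSpace ℝ (Fin d) → ℝ) (hf : Measurable f)
    (hf2 : Integrable (fun ω => (f (X ω) - Y ω) ^ 2) μ)
    (Rf : EuclideanSpace ℝ (Fin d) → ℝ) (hRf_m : Measurable Rf)
    (hRf : IsCondMean μ X (fun ω => (f (X ω) - Y ω) ^ 2) Rf)
    (B : ℝ) (hBc : c ≤ B)
    (hRB : ∀ᵐ ω ∂μ, Rf (X ω) ≤ B)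
    (r : EuclideanSpace ℝ (Fin d) → ℝ) (hr_m : Measurable r)
    (hr01 : ∀ x, r x = 0 ∨ r x = 1) :
    0 ≤ LRwR μ X Y c f r - LRwR μ X Y c f (fun x => if Rf x ≤ c then 1 else 0) ∧
    LRwR μ X Y c f r - LRwR μ X Y c f (fun x => if Rf x ≤ c then 1 else 0)
      ≤ ∫ ω, (Rf (X ω) + c) *
          (if r (X ω) = (if Rf (X ω) ≤ c then (1 : ℝ) else 0) then 0 else 1) ∂μ ∧
    ∫ ω, (Rf (X ω) + c) *
        (if r (X ω) = (if Rf (X ω) ≤ c then (1 : ℝ) else 0) then 0 else 1) ∂μ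
      ≤ (B + c) *
        (μ {ω | r (X ω) ≠ (if Rf (X ω) ≤ c then (1 : ℝ) else 0)}).toReal := by
  classical
  have hm : MeasurableSpace.comap X inferInstance ≤ (by infer_instance : MeasurableSpace Ω) :=
    hX.comap_le
  set Z : Ω → ℝ := fun ω => (f (X ω) - Y ω) ^ 2 with hZ_def
  set rf : EuclideanSpace ℝ (Fin d) → ℝ := fun x => if Rf x ≤ c then 1 else 0 with hrf_def
  have hrf_m : Measurable rf := Measurable.ite (measurableSet_le hRf_m measurable_const)
    measurable_const measurable_const
  have hrf01 : ∀ x, rf x = 0 ∨ rf x = 1 := by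
    intro x; by_cases h : Rf x ≤ c <;> simp [hrf_def, h]
  -- integrability of Rf ∘ X
  have hRfX_int : Integrable (fun ω => Rf (X ω)) μ := integrable_condExp.congr hRf.symm
  -- nonnegativity of Rf ∘ X a.e.
  have hRf_nonneg : ∀ᵐ ω ∂μ, 0 ≤ Rf (X ω) := by
    have h1 : (0 : Ω → ℝ) ≤ᵐ[μ] μ[Z | MeasurableSpace.comap X inferInstance] :=
      condExp_nonneg (Eventually.of_forall fun ω => sq_nonneg _)
    filter_upwards [h1, hRf] with ω h1 h2
    rw [h2]; exact h1
  -- key: for any {0,1}-valued measurable w, ∫ w(X)·Z = ∫ w(X)·Rf(X)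
  have key : ∀ w : EuclideanSpace ℝ (Fin d) → ℝ, Measurable w →
      (∀ x, w x = 0 ∨ w x = 1) →
      ∫ ω, w (X ω) * Z ω ∂μ = ∫ ω, w (X ω) * Rf (X ω) ∂μ := by
    intro w hw hw01
    set S : Set Ω := X ⁻¹' (w ⁻¹' {1}) with hS_def
    have hSm : MeasurableSet[MeasurableSpace.comap X inferInstance] S :=
      ⟨w ⁻¹' {1}, hw (measurableSet_singleton 1), rfl⟩
    have hSm0 : MeasurableSet S := hm S hSm
    have hind : ∀ (g : Ω → ℝ) (ω : Ω), w (X ω) * g ω = S.indicator g ω := by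
      intro g ω
      rcases hw01 (X ω) with h | h
      · have : ω ∉ S := by simp [hS_def, h]
        simp [h, Set.indicator_of_notMem this]
      · have : ω ∈ S := by simp [hS_def, h]
        simp [h, Set.indicator_of_mem this]
    calc ∫ ω, w (X ω) * Z ω ∂μ = ∫ ω, S.indicator Z ω ∂μ := by
          exact integral_congr_ae (Eventually.of_forall fun ω => hind Z ω)
      _ = ∫ ω in S, Z ω ∂μ := integral_indicator hSm0
      _ = ∫ ω in S, (μ[Z | MeasurableSpace.comap X inferInstance]) ω ∂μ :=
          (setIntegral_condExp hm hf2 hSm).symm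
      _ = ∫ ω in S, Rf (X ω) ∂μ := integral_congr_ae (ae_restrict_of_ae hRf.symm)
      _ = ∫ ω, S.indicator (fun ω => Rf (X ω)) ω ∂μ := (integral_indicator hSm0).symm
      _ = ∫ ω, w (X ω) * Rf (X ω) ∂μ :=
          integral_congr_ae (Eventually.of_forall fun ω => (hind _ ω).symm)
  -- integrability lemmas for products with a {0,1}-valued weight
  have hbd : ∀ w : EuclideanSpace ℝ (Fin d) → ℝ, (∀ x, w x = 0 ∨ w x = 1) →
      ∃ C, ∀ ω, ‖w (X ω)‖ ≤ C := by
    intro w hw01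
    exact ⟨1, fun ω => by rcases hw01 (X ω) with h | h <;> simp [h]⟩
  have hint_wZ : ∀ w : EuclideanSpace ℝ (Fin d) → ℝ, Measurable w →
      (∀ x, w x = 0 ∨ w x = 1) → Integrable (fun ω => w (X ω) * Z ω) μ := fun w hw hw01 =>
    hf2.bdd_mul ((hw.comp hX).aestronglyMeasurable) (Eventually.of_forall (hbd w hw01).choose_spec)
  have hint_wc : ∀ w : EuclideanSpace ℝ (Fin d) → ℝ, Measurable w →
      (∀ x, w x = 0 ∨ w x = 1) → Integrable (fun ω => (1 - w (X ω)) * c) μ := by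
    intro w hw hw01
    have h1 : Integrable (fun ω => w (X ω) * c) μ :=
      (integrable_const c).bdd_mul ((hw.comp hX).aestronglyMeasurable) (Eventually.of_forall (hbd w hw01).choose_spec)
    exact ((integrable_const c).sub h1).congr (Eventually.of_forall fun ω => by
      simp only [Pi.sub_apply]; ring)
  have hint_wRf : ∀ w : EuclideanSpace ℝ (Fin d) → ℝ, Measurable w →
      (∀ x, w x = 0 ∨ w x = 1) → Integrable (fun ω => w (X ω) * Rf (X ω)) μ := fun w hw hw01 =>
    hRfX_int.bdd_mul ((hw.comp hX).aestronglyMeasurable) (Eventually.of_forall (hbd w hw01).choose_spec)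
  -- the loss in terms of Rf
  have hL : ∀ w : EuclideanSpace ℝ (Fin d) → ℝ, Measurable w →
      (∀ x, w x = 0 ∨ w x = 1) →
      LRwR μ X Y c f w = ∫ ω, w (X ω) * Rf (X ω) + (1 - w (X ω)) * c ∂μ := by
    intro w hw hw01
    have h0 : LRwR μ X Y c f w = ∫ ω, w (X ω) * Z ω + (1 - w (X ω)) * c ∂μ := rfl
    rw [h0, integral_add (hint_wZ w hw hw01) (hint_wc w hw hw01), key w hw hw01,
      ← integral_add (hint_wRf w hw hw01) (hint_wc w hw hw01)]
  have hLsum : ∀ w : EuclideanSpace ℝ (Fin d) → ℝ, Measurable w →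
      (∀ x, w x = 0 ∨ w x = 1) →
      Integrable (fun ω => w (X ω) * Rf (X ω) + (1 - w (X ω)) * c) μ := fun w hw hw01 =>
    (hint_wRf w hw hw01).add (hint_wc w hw hw01)
  have hdiff : LRwR μ X Y c f r - LRwR μ X Y c f rf
      = ∫ ω, (r (X ω) - rf (X ω)) * (Rf (X ω) - c) ∂μ := by
    rw [hL r hr_m hr01, hL rf hrf_m hrf01,
      ← integral_sub (hLsum r hr_m hr01) (hLsum rf hrf_m hrf01)]
    exact integral_congr_ae (Eventually.of_forall fun ω => by ring)
  -- integrands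
  set g : Ω → ℝ := fun ω => (r (X ω) - rf (X ω)) * (Rf (X ω) - c) with hg_def
  set h : Ω → ℝ := fun ω => (Rf (X ω) + c) * (if r (X ω) = rf (X ω) then 0 else 1) with hh_def
  have hg_int : Integrable g μ :=
    (((hint_wRf r hr_m hr01).sub (hint_wRf rf hrf_m hrf01)).add
      ((hint_wc r hr_m hr01).sub (hint_wc rf hrf_m hrf01))).congr
      (Eventually.of_forall fun ω => by simp only [Pi.add_apply, Pi.sub_apply, hg_def]; ring)
  have hh_int : Integrable h μ := by
    have h1 : Integrable (fun ω => (if r (X ω) = rf (X ω) then (0:ℝ) else 1) * (Rf (X ω) + c)) μ := by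
      refine (hRfX_int.add (integrable_const c)).bdd_mul (c := 1) ?_ (Eventually.of_forall fun ω => ?_)
      · exact ((Measurable.ite (measurableSet_eq_fun (hr_m.comp hX) (hrf_m.comp hX))
          measurable_const measurable_const)).aestronglyMeasurable
      · by_cases hω : r (X ω) = rf (X ω) <;> simp [hω]
    exact h1.congr (Eventually.of_forall fun ω => mul_comm _ _)
  -- pointwise a.e. bounds
  have hg_nonneg : ∀ᵐ ω ∂μ, 0 ≤ g ω := by
    filter_upwards with ω
    rcases hr01 (X ω) with hr0 | hr0 <;> by_cases hle : Rf (X ω) ≤ c <;>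
      simp [hg_def, hrf_def, hr0, hle] <;> linarith
  have hgh : ∀ᵐ ω ∂μ, g ω ≤ h ω := by
    filter_upwards [hRf_nonneg] with ω hpos
    rcases hr01 (X ω) with hr0 | hr0 <;> by_cases hle : Rf (X ω) ≤ c <;>
      simp [hg_def, hh_def, hrf_def, hr0, hle] <;> linarith
  have hhB : ∀ᵐ ω ∂μ,
      h ω ≤ (B + c) * (if r (X ω) = rf (X ω) then 0 else 1) := by
    filter_upwards [hRB, hRf_nonneg] with ω hB hpos
    by_cases hω : r (X ω) = rf (X ω) <;> simp [hh_def, hω] <;> linarith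
  -- the set where they disagree
  set s : Set Ω := {ω | r (X ω) ≠ rf (X ω)} with hs_def
  have hs_m : MeasurableSet s :=
    (measurableSet_eq_fun (hr_m.comp hX) (hrf_m.comp hX)).compl
  have hind_eq : ∀ ω, (B + c) * (if r (X ω) = rf (X ω) then (0:ℝ) else 1)
      = s.indicator (fun _ => B + c) ω := by
    intro ω
    by_cases hω : r (X ω) = rf (X ω) <;>
      simp [hω, Set.indicator, hs_def]
  have hind_int : Integrable (fun ω => (B + c) * (if r (X ω) = rf (X ω) then (0:ℝ) else 1)) μ := by
    exact (((integrable_const (B + c)).indicator hs_m).congr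
      (Eventually.of_forall fun ω => (hind_eq ω).symm))
  have hfinal : ∫ ω, h ω ∂μ ≤ (B + c) * (μ s).toReal := by
    calc ∫ ω, h ω ∂μ ≤ ∫ ω, (B + c) * (if r (X ω) = rf (X ω) then (0:ℝ) else 1) ∂μ :=
          integral_mono_ae hh_int hind_int hhB
      _ = ∫ ω, s.indicator (fun _ => B + c) ω ∂μ :=
          integral_congr_ae (Eventually.of_forall fun ω => hind_eq ω)
      _ = (B + c) * (μ s).toReal := by
          rw [integral_indicator hs_m, setIntegral_const, smul_eq_mul, mul_comm, measureReal_def]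
  refine ⟨?_, ?_, ?_⟩
  · rw [hdiff]; exact integral_nonneg_of_ae hg_nonneg
  · rw [hdiff]; exact integral_mono_ae hg_int hh_int hgh
  · exact hfinal
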